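/- Let F be a field, L ≥ 3, V = ZMod L, and let g : V → F be arbitrary. Let G : Matrix V V F be the matrix with G (u+1) u = g u for all u ∈ V and all other entries zero, and set φ = ∏_{u ∈ V} g u. If φ ≠ 1, then I − G is invertible and for all i, j ∈ V the entry (I − G)⁻¹ j i equals (1 − φ)⁻¹ times the product of the modules along the forward path from i to j, i.e., (1 − φ)⁻¹ · ∏_{t = 0}^{d−1} g (i + t), where d is the representative in {0, 1, …, L−1} of j − i in ZMod L (an empty product, equal to 1, when j = i). -/

import Mathlib

open Matrix

lemma aux_prod (L : ℕ) [NeZero L] {F : Type*} [CommRing F] (f : ZMod L → F) :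
    ∏ u : ZMod L, f u = ∏ t ∈ Finset.range L, f t := by
  refine Finset.prod_nbij' (fun u => u.val) (fun t => (t : ZMod L)) ?_ ?_ ?_ ?_ ?_
  · intro u _; exact Finset.mem_range.2 u.val_lt
  · intro t _; exact Finset.mem_univ _
  · intro u _; exact ZMod.natCast_zmod_val u
  · intro t ht; exact ZMod.val_cast_of_lt (Finset.mem_range.1 ht)
  · intro u _; rw [ZMod.natCast_zmod_val]

lemma aux_val_sub_one (L : ℕ) [NeZero L] (x : ZMod L) (hx : x ≠ 0) :
    (x - 1).val = x.val - 1 := by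
  have h1 : 1 ≤ x.val := Nat.one_le_iff_ne_zero.2 (fun h => hx ((ZMod.val_eq_zero x).1 h))
  have hxx : ((x.val : ℕ) : ZMod L) = x := ZMod.natCast_zmod_val x
  have : x - 1 = ((x.val - 1 : ℕ) : ZMod L) := by
    rw [Nat.cast_sub h1, hxx, Nat.cast_one]
  rw [this, ZMod.val_cast_of_lt]
  exact lt_of_le_of_lt (Nat.sub_le _ _) x.val_lt

lemma aux_val_neg_one (L : ℕ) [NeZero L] (hL : 3 ≤ L) : (-1 : ZMod L).val = L - 1 := by
  have h1 : 1 ≤ L := by omega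
  have : (-1 : ZMod L) = ((L - 1 : ℕ) : ZMod L) := by
    rw [Nat.cast_sub h1, ZMod.natCast_self, Nat.cast_one, zero_sub]
  rw [this, ZMod.val_cast_of_lt (by omega)]

theorem stmt_15 (F : Type*) [Field F] (L : ℕ) [NeZero L] (hL : 3 ≤ L)
    (g : ZMod L → F)
    (G : Matrix (ZMod L) (ZMod L) F)
    (hG : ∀ j i : ZMod L, G j i = if j = i + 1 then g i else 0)
    (φ : F) (hφdef : φ = ∏ u : ZMod L, g u) (hφ : φ ≠ 1) :
    IsUnit (1 - G) ∧
      ∀ i j : ZMod L, (1 - G)⁻¹ j i =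
        (1 - φ)⁻¹ * ∏ t ∈ Finset.range ((j - i).val), g (i + (t : ZMod L)) := by
  have hφ0 : (1 : F) - φ ≠ 0 := sub_ne_zero.2 (Ne.symm hφ)
  set c : F := (1 - φ)⁻¹ with hc
  set B : Matrix (ZMod L) (ZMod L) F :=
    Matrix.of fun j i => c * ∏ t ∈ Finset.range ((j - i).val), g (i + (t : ZMod L)) with hB
  have hBapp : ∀ j i, B j i = c * ∏ t ∈ Finset.range ((j - i).val), g (i + (t : ZMod L)) :=
    fun j i => rfl
  have key : ∀ i : ZMod L, φ = ∏ t ∈ Finset.range L, g (i + (t : ZMod L)) := by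
    intro i
    rw [hφdef, ← aux_prod L (fun u => g (i + u))]
    exact (Fintype.prod_equiv (Equiv.addLeft i) (fun u => g (i + u)) g (fun u => rfl)).symm
  have hmul : (1 - G) * B = 1 := by
    ext j i
    rw [Matrix.mul_apply, Matrix.one_apply]
    have hrow : ∀ k : ZMod L, (1 - G) j k * B k i =
        (if j = k then B k i else 0) - (if k = j - 1 then g k * B k i else 0) := by
      intro k
      rw [Matrix.sub_apply, Matrix.one_apply, hG, sub_mul, ite_mul, one_mul, zero_mul,
        ite_mul, zero_mul]
      congr 2
      apply propext
      constructor
      · intro h; exact (eq_sub_iff_add_eq).2 h.symm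
      · intro h; exact ((eq_sub_iff_add_eq).1 h).symm
    rw [Finset.sum_congr rfl (fun k _ => hrow k), Finset.sum_sub_distrib,
      Finset.sum_ite_eq, Finset.sum_ite_eq']
    simp only [Finset.mem_univ, if_true]
    by_cases hji : j = i
    · subst hji
      rw [if_pos rfl, hBapp, hBapp, sub_self, ZMod.val_zero, Finset.prod_range_zero, mul_one]
      have h1 : j - 1 - j = -1 := by ring
      have h2 : (j - 1 - j).val = L - 1 := by rw [h1, aux_val_neg_one L hL]
      rw [h2]
      have h3 : φ = (∏ t ∈ Finset.range (L - 1), g (j + (t : ZMod L))) * g (j - 1) := by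
        have hps := Finset.prod_range_succ (fun t => g (j + (t : ZMod L))) (L - 1)
        rw [show L - 1 + 1 = L by omega] at hps
        rw [key j, hps]
        have hcast : (((L - 1 : ℕ)) : ZMod L) = -1 := by
          rw [Nat.cast_sub (by omega : 1 ≤ L), ZMod.natCast_self, Nat.cast_one, zero_sub]
        simp only [hcast]
        congr 2
        ring
      have h4 : g (j - 1) * (c * ∏ t ∈ Finset.range (L - 1), g (j + (t : ZMod L))) = c * φ := by
        rw [h3]; ring
      rw [h4, hc]
      field_simp
    · rw [if_neg hji, hBapp, hBapp]
      have hd0 : j - i ≠ 0 := sub_ne_zero.2 hji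
      have hd1 : 1 ≤ (j - i).val :=
        Nat.one_le_iff_ne_zero.2 (fun h => hd0 ((ZMod.val_eq_zero _).1 h))
      have h1 : j - 1 - i = (j - i) - 1 := by ring
      have h2 : (j - 1 - i).val = (j - i).val - 1 := by
        rw [h1, aux_val_sub_one L (j - i) hd0]
      have h3 : i + (((j - i).val - 1 : ℕ) : ZMod L) = j - 1 := by
        rw [Nat.cast_sub hd1, ZMod.natCast_zmod_val, Nat.cast_one]; ring
      have hps := Finset.prod_range_succ (fun t => g (i + (t : ZMod L))) ((j - i).val - 1)
      rw [show (j - i).val - 1 + 1 = (j - i).val by omega] at hps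
      rw [h2, hps, h3]
      ring
  have hdet : IsUnit (1 - G).det := by
    apply IsUnit.of_mul_eq_one B.det
    rw [← Matrix.det_mul, hmul, Matrix.det_one]
  refine ⟨(Matrix.isUnit_iff_isUnit_det _).2 hdet, ?_⟩
  intro i j
  rw [Matrix.inv_eq_right_inv hmul, hBapp]
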